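/- Let p be a prime, W an m-dimensional F_p-vector space, h : U → F_p a function on a set U, and suppose duals (F_c)* : U → F_p (for c ∈ W, c ≠ 0) satisfy the cocycle-type relation (F_d)*(x) − (F_e)*(x) − (F_{d−e})*(x) = −h(x) for all d ≠ e nonzero in W and x ∈ U. Then there exists a function G : U → W such that (F_c)*(x) = ⟨c, G(x)⟩ + h(x) for all nonzero c ∈ W and x ∈ U. -/

import Mathlib

/-- If the duals `(F_c)* : U → F_p` (`c ∈ W`, `c ≠ 0`, `W` an
`m`-dimensional `F_p`-vector space) satisfy
`(F_d)*(x) − (F_e)*(x) − (F_{d−e})*(x) = −h(x)` for all nonzero `d ≠ e` and all `x`,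
then there is a function `G : U → W` with `(F_c)*(x) = ⟨c, G(x)⟩ + h(x)` for all
nonzero `c` and all `x`, where `⟨·,·⟩` is a non-degenerate bilinear form on `W`. -/
theorem stmt19 (p m : ℕ) [Fact p.Prime]
    (W : Type*) [AddCommGroup W] [Module (ZMod p) W] [FiniteDimensional (ZMod p) W]
    (hdim : Module.finrank (ZMod p) W = m)
    (φ : W →ₗ[ZMod p] W →ₗ[ZMod p] ZMod p)
    (hnd : ∀ v : W, (∀ w : W, φ v w = 0) → v = 0)
    (U : Type*) (h : U → ZMod p) (Fstar : W → U → ZMod p)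
    (hrel : ∀ d e : W, d ≠ 0 → e ≠ 0 → d ≠ e → ∀ x : U,
      Fstar d x - Fstar e x - Fstar (d - e) x = -(h x)) :
    ∃ G : U → W, ∀ c : W, c ≠ 0 → ∀ x : U, Fstar c x = φ c (G x) + h x := by
  classical
  -- φ as a nondegenerate bilinear form; its flip is also nondegenerate
  have hndB : LinearMap.BilinForm.Nondegenerate φ := LinearMap.BilinForm.Nondegenerate.ofSeparatingLeft hnd
  have hflip : LinearMap.BilinForm.Nondegenerate (LinearMap.flip φ) := hndB.flip
  -- the (shifted) function, extended by 0 at c = 0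
  set f : W → U → ZMod p := fun c x => if c = 0 then 0 else Fstar c x - h x with hf
  have fval : ∀ c : W, c ≠ 0 → ∀ x, f c x = Fstar c x - h x := by
    intro c hc x; simp [hf, hc]
  -- additivity for nonzero arguments with nonzero sum
  have hadd0 : ∀ (a b : W), a ≠ 0 → b ≠ 0 → a + b ≠ 0 → ∀ x,
      f (a + b) x = f a x + f b x := by
    intro a b ha hb hab x
    have hne : a + b ≠ a := fun hEq => hb (by linear_combination (norm := abel) hEq)
    have hr := hrel (a + b) a hab ha hne x
    rw [show a + b - a = b by abel] at hr
    rw [fval _ hab, fval _ ha, fval _ hb]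
    linear_combination hr
  -- behaviour on negatives
  have hneg : ∀ (a : W), a ≠ 0 → ∀ x, f (-a) x + f a x = 0 := by
    intro a ha x
    by_cases h2 : a + a = 0
    · -- then 2 = 0 in ZMod p and -a = a
      have hna : -a = a := by
        rw [neg_eq_iff_add_eq_zero]; exact h2
      have h2p : (2 : ZMod p) = 0 := by
        by_contra h2p
        apply ha
        have : (2 : ZMod p) • a = 0 := by
          rw [two_smul]; exact h2
        exact (smul_eq_zero.mp this).resolve_left h2p
      rw [hna]
      have : f a x + f a x = (2 : ZMod p) * f a x := by ring
      rw [this, h2p, zero_mul]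
    · -- use the relation with d = a, e = a + a
      have hna : -a ≠ 0 := neg_ne_zero.mpr ha
      have hne : a ≠ a + a := fun hEq => ha (add_left_cancel (a := a) (by rw [add_zero]; exact hEq)).symm
      have hr := hrel a (a + a) ha h2 hne x
      rw [show a - (a + a) = -a by abel] at hr
      have h2a : f (a + a) x = f a x + f a x := hadd0 a a ha ha h2 x
      rw [fval _ h2, fval _ ha] at h2a
      rw [fval _ hna, fval _ ha]
      linear_combination -h2a - hr
  -- full additivity
  have hadd : ∀ (a b : W) (x : U), f (a + b) x = f a x + f b x := by
    intro a b x
    by_cases ha : a = 0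
    · simp [ha, hf]
    by_cases hb : b = 0
    · simp [hb, hf]
    by_cases hab : a + b = 0
    · have hba : b = -a := by linear_combination (norm := abel) hab
      rw [hab, hba]
      simp only [hf, if_pos rfl]
      have := hneg a ha x
      simp only [hf, if_neg ha, if_neg (neg_ne_zero.mpr ha)] at this ⊢
      linear_combination -this
    · exact hadd0 a b ha hb hab x
  -- for each x, package f · x as a linear functional
  set L : U → (W →ₗ[ZMod p] ZMod p) := fun x =>
    AddMonoidHom.toZModLinearMap p (AddMonoidHom.mk' (fun c => f c x) (fun a b => hadd a b x))
    with hL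
  -- pull back through the nondegenerate pairing
  refine ⟨fun x => (LinearMap.BilinForm.toDual (LinearMap.flip φ) hflip).symm (L x), ?_⟩
  intro c hc x
  have key : (LinearMap.flip φ) ((LinearMap.BilinForm.toDual (LinearMap.flip φ) hflip).symm (L x)) c = L x c :=
    LinearMap.BilinForm.apply_toDual_symm_apply (hB := hflip) (L x) c
  have : φ c ((LinearMap.BilinForm.toDual (LinearMap.flip φ) hflip).symm (L x)) = L x c := key
  rw [this]
  have hLc : L x c = f c x := rfl
  rw [hLc, fval c hc x]
  ring
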